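/- Let 0 ≤ α < 1 and fix integers n ≥ 2 and m ≥ 2. The function r ↦ ψ(n,m,r,α) has exactly one zero in the open interval (0,1); moreover ψ(n,m,r,α) > 0 for all r in (0, r_{n,m}), where r_{n,m} denotes this zero. -/

import Mathlib

open Complex Metric ComplexConjugate

/-- `L(r,α) = ∫₀^r (1−ρ)(1+ρ)^{2α−2} dρ`. -/
noncomputable def Lfun (r α : ℝ) : ℝ := ∫ ρ in (0:ℝ)..r, (1 - ρ) * (1 + ρ) ^ (2 * α - 2)

/-- `A(r,α) = ((1−r²)/r²)·L(r,α)²`. -/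
noncomputable def Afun (r α : ℝ) : ℝ := ((1 - r ^ 2) / r ^ 2) * (Lfun r α) ^ 2

/-- `A_k(α) = (1/k!)·∏_{j=2}^k (j − 2α)`. -/
noncomputable def coefA (α : ℝ) (k : ℕ) : ℝ :=
  (1 / (Nat.factorial k : ℝ)) * ∏ j ∈ Finset.Icc 2 k, ((j : ℝ) - 2 * α)

/-- `ψ(n,m,r,α)`. -/
noncomputable def psiFun (n m : ℕ) (r α : ℝ) : ℝ :=
  Afun r α
    - ∑' k : ℕ, (((n : ℝ) + 1 + k) * coefA α (n + 1 + k) * r ^ (n + k))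
    - ∑' k : ℕ, ((((m : ℝ) + 1 + k) * (((m : ℝ) + 1 + k) - 1) / (((m : ℝ) + 1 + k) - 2 * α))
        * coefA α (m + 1 + k) * r ^ (m + k))

/-- Membership in the class `F(α)`. -/
def MemF (α : ℝ) (h g : ℂ → ℂ) : Prop :=
  DifferentiableOn ℂ h (ball 0 1) ∧ DifferentiableOn ℂ g (ball 0 1) ∧
  h 0 = 0 ∧ g 0 = 0 ∧ deriv h 0 = 1 ∧
  (∀ z ∈ ball (0 : ℂ) 1, deriv h z ≠ 0) ∧
  (∀ z ∈ ball (0 : ℂ) 1, α < (1 + z * deriv (deriv h) z / deriv h z).re) ∧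
  (∃ θ : ℝ, ∀ z ∈ ball (0 : ℂ) 1, deriv g z = Complex.exp (θ * Complex.I) * z * deriv h z)

/-- `ψ(n,m,·,α)` has a unique zero `r_{n,m}` in `(0,1)`, and is positive on
`(0, r_{n,m})`. -/
noncomputable def fInt (α ρ : ℝ) : ℝ := (1 - ρ) * (1 + ρ) ^ (2 * α - 2)

lemma Lfun_eq (r α : ℝ) : Lfun r α = ∫ ρ in (0:ℝ)..r, fInt α ρ := rfl

lemma fInt_contOn (α : ℝ) : ContinuousOn (fInt α) (Set.Ici 0) := by
  apply ContinuousOn.mul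
  · exact (continuous_const.sub continuous_id).continuousOn
  · apply ContinuousOn.rpow_const
    · exact (continuous_const.add continuous_id).continuousOn
    · intro x hx
      left
      have : (0:ℝ) ≤ x := hx
      positivity

lemma fInt_pos {α ρ : ℝ} (h0 : 0 ≤ ρ) (h1 : ρ < 1) : 0 < fInt α ρ := by
  have h2 : (0:ℝ) < 1 + ρ := by linarith
  have := Real.rpow_pos_of_pos h2 (2 * α - 2)
  have h3 : (0:ℝ) < 1 - ρ := by linarith
  exact mul_pos h3 this

lemma fInt_nonneg {α ρ : ℝ} (h0 : 0 ≤ ρ) (h1 : ρ ≤ 1) : 0 ≤ fInt α ρ := by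
  have h2 : (0:ℝ) < 1 + ρ := by linarith
  have := (Real.rpow_pos_of_pos h2 (2 * α - 2)).le
  have h3 : (0:ℝ) ≤ 1 - ρ := by linarith
  exact mul_nonneg h3 this

lemma fInt_le_one {α ρ : ℝ} (hα : α ≤ 1) (h0 : 0 ≤ ρ) (h1 : ρ ≤ 1) : fInt α ρ ≤ 1 := by
  have h2 : (1:ℝ) ≤ 1 + ρ := by linarith
  have hz : 2 * α - 2 ≤ 0 := by linarith
  have hr : (1 + ρ) ^ (2 * α - 2) ≤ 1 := Real.rpow_le_one_of_one_le_of_nonpos h2 hz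
  have h3 : (0:ℝ) ≤ 1 - ρ := by linarith
  unfold fInt
  nlinarith [Real.rpow_pos_of_pos (show (0:ℝ) < 1 + ρ by linarith) (2 * α - 2)]

lemma fInt_anti {α x y : ℝ} (hα : α ≤ 1) (h0 : 0 ≤ x) (hxy : x ≤ y) (h1 : y ≤ 1) :
    fInt α y ≤ fInt α x := by
  have hz : 2 * α - 2 ≤ 0 := by linarith
  have hb : (0:ℝ) < 1 + x := by linarith
  have hrp : (1 + y) ^ (2 * α - 2) ≤ (1 + x) ^ (2 * α - 2) :=
    Real.rpow_le_rpow_of_nonpos hb (by linarith) hz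
  have hy : (0:ℝ) ≤ (1 + y) ^ (2 * α - 2) :=
    (Real.rpow_pos_of_pos (by linarith) _).le
  exact mul_le_mul (by linarith) hrp hy (by linarith)

lemma fInt_strictAnti {α x y : ℝ} (hα : α ≤ 1) (h0 : 0 ≤ x) (hxy : x < y) (h1 : y < 1) :
    fInt α y < fInt α x := by
  have hz : 2 * α - 2 ≤ 0 := by linarith
  have hb : (0:ℝ) < 1 + x := by linarith
  have hyp : (0:ℝ) < (1 + y) ^ (2 * α - 2) := Real.rpow_pos_of_pos (by linarith) _
  have hrp : (1 + y) ^ (2 * α - 2) ≤ (1 + x) ^ (2 * α - 2) :=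
    Real.rpow_le_rpow_of_nonpos hb (by linarith) hz
  calc (1 - y) * (1 + y) ^ (2 * α - 2) < (1 - x) * (1 + y) ^ (2 * α - 2) := by
        apply mul_lt_mul_of_pos_right (by linarith) hyp
    _ ≤ (1 - x) * (1 + x) ^ (2 * α - 2) := by
        apply mul_le_mul_of_nonneg_left hrp (by linarith)

lemma fInt_intble {a b : ℝ} (α : ℝ) (h0 : 0 ≤ a) (h1 : 0 ≤ b) :
    IntervalIntegrable (fInt α) MeasureTheory.volume a b := by
  apply ContinuousOn.intervalIntegrable
  apply (fInt_contOn α).mono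
  intro x hx
  rcases hx with hx
  simp only [Set.uIcc, Set.mem_Icc] at hx
  have := hx.1
  simp only [Set.mem_Ici]
  exact le_trans (le_min h0 h1) hx.1

-- segment bounds
lemma seg_lb {α a b : ℝ} (hα : α ≤ 1) (h0 : 0 ≤ a) (hab : a ≤ b) (h1 : b ≤ 1) :
    (b - a) * fInt α b ≤ ∫ ρ in a..b, fInt α ρ := by
  have h := intervalIntegral.integral_mono_on hab
    (intervalIntegrable_const (c := fInt α b)) (fInt_intble α h0 (h0.trans hab))
    (fun x hx => fInt_anti hα (h0.trans hx.1) hx.2 h1)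
  simpa using h

lemma seg_ub {α a b : ℝ} (hα : α ≤ 1) (h0 : 0 ≤ a) (hab : a ≤ b) (h1 : b ≤ 1) :
    (∫ ρ in a..b, fInt α ρ) ≤ (b - a) * fInt α a := by
  have h := intervalIntegral.integral_mono_on hab
    (fInt_intble α h0 (h0.trans hab)) (intervalIntegrable_const (c := fInt α a))
    (fun x hx => fInt_anti hα h0 hx.1 (hx.2.trans h1))
  simpa using h

lemma L_le {α r : ℝ} (hα : α ≤ 1) (h0 : 0 ≤ r) (h1 : r ≤ 1) : Lfun r α ≤ r := by
  rw [Lfun_eq]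
  have := seg_ub (a := 0) (b := r) hα le_rfl h0 h1
  have hf1 : fInt α 0 ≤ 1 := fInt_le_one hα le_rfl zero_le_one
  nlinarith

lemma L_ge {α r : ℝ} (hα : α ≤ 1) (h0 : 0 ≤ r) (h1 : r ≤ 1) : r * fInt α r ≤ Lfun r α := by
  rw [Lfun_eq]
  have := seg_lb (a := 0) (b := r) hα le_rfl h0 h1
  linarith

lemma L_nonneg {α r : ℝ} (hα : α ≤ 1) (h0 : 0 ≤ r) (h1 : r ≤ 1) : 0 ≤ Lfun r α := by
  have := L_ge (α := α) hα h0 h1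
  nlinarith [fInt_nonneg (α := α) h0 h1]

lemma L_split {α r s : ℝ} (h0 : 0 ≤ r) (hrs : r ≤ s) :
    Lfun s α = Lfun r α + ∫ ρ in r..s, fInt α ρ := by
  rw [Lfun_eq, Lfun_eq]
  rw [intervalIntegral.integral_add_adjacent_intervals (fInt_intble α le_rfl h0)
    (fInt_intble α h0 (h0.trans hrs))]

lemma L_lower_strict {α r : ℝ} (hα : α ≤ 1) (h0 : 0 < r) (h1 : r < 1) :
    r * fInt α r < Lfun r α := by
  have hsplit : Lfun r α = Lfun (r/2) α + ∫ ρ in (r/2)..r, fInt α ρ :=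
    L_split (by linarith) (by linarith)
  have h1' : Lfun (r/2) α ≥ (r/2) * fInt α (r/2) := by
    have := L_ge (α := α) hα (by linarith : (0:ℝ) ≤ r/2) (by linarith)
    linarith
  have h2 : (r - r/2) * fInt α r ≤ ∫ ρ in (r/2)..r, fInt α ρ :=
    seg_lb hα (by linarith) (by linarith) h1.le
  have h3 : fInt α r < fInt α (r/2) := fInt_strictAnti hα (by linarith) (by linarith) h1
  nlinarith

lemma ratio_strict {α r s : ℝ} (hα : α ≤ 1) (h0 : 0 < r) (hrs : r < s) (h1 : s < 1) :
    r * Lfun s α < s * Lfun r α := by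
  have hsplit : Lfun s α = Lfun r α + ∫ ρ in r..s, fInt α ρ := L_split h0.le hrs.le
  have hub : (∫ ρ in r..s, fInt α ρ) ≤ (s - r) * fInt α r :=
    seg_ub hα h0.le hrs.le h1.le
  have hL : r * fInt α r < Lfun r α := L_lower_strict hα h0 (hrs.trans h1)
  nlinarith

lemma Afun_eq {r α : ℝ} (h0 : 0 < r) : Afun r α = (1 - r ^ 2) * (Lfun r α / r) ^ 2 := by
  unfold Afun
  field_simp

lemma Afun_strictAnti {α r s : ℝ} (hα : α ≤ 1) (h0 : 0 < r) (hrs : r < s) (h1 : s < 1) :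
    Afun s α < Afun r α := by
  have hs0 : 0 < s := h0.trans hrs
  rw [Afun_eq h0, Afun_eq hs0]
  have hr1 : r < 1 := hrs.trans h1
  have hv : 0 ≤ Lfun s α / s := div_nonneg (L_nonneg hα hs0.le h1.le) hs0.le
  have huv : Lfun s α / s < Lfun r α / r := by
    rw [div_lt_div_iff₀ hs0 h0]
    have := ratio_strict hα h0 hrs h1
    nlinarith
  have hsq : (Lfun s α / s) ^ 2 < (Lfun r α / r) ^ 2 := by
    apply pow_lt_pow_left₀ huv hv (by norm_num)
  have h2 : (0:ℝ) < 1 - s ^ 2 := by nlinarith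
  have h3 : 1 - s ^ 2 < 1 - r ^ 2 := by nlinarith
  calc (1 - s ^ 2) * (Lfun s α / s) ^ 2 ≤ (1 - s ^ 2) * (Lfun r α / r) ^ 2 := by
        apply mul_le_mul_of_nonneg_left hsq.le h2.le
    _ < (1 - r ^ 2) * (Lfun r α / r) ^ 2 := by
        apply mul_lt_mul_of_pos_right h3
        have : 0 < Lfun r α / r := lt_of_le_of_lt hv huv
        positivity

lemma Afun_le {α r : ℝ} (hα : α ≤ 1) (h0 : 0 < r) (h1 : r ≤ 1) : Afun r α ≤ 1 - r ^ 2 := by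
  rw [Afun_eq h0]
  have hL0 : 0 ≤ Lfun r α := L_nonneg hα h0.le h1
  have hLr : Lfun r α ≤ r := L_le hα h0.le h1
  have hd : Lfun r α / r ≤ 1 := by
    rw [div_le_one h0]; exact hLr
  have hd0 : 0 ≤ Lfun r α / r := div_nonneg hL0 h0.le
  have h2 : (0:ℝ) ≤ 1 - r ^ 2 := by nlinarith
  have hsq : (Lfun r α / r) ^ 2 ≤ 1 := by nlinarith
  nlinarith

lemma Afun_ge {α r : ℝ} (hα : α ≤ 1) (h0 : 0 < r) (h1 : r ≤ 1) :
    (1 - r ^ 2) * (fInt α r) ^ 2 ≤ Afun r α := by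
  rw [Afun_eq h0]
  have hL : r * fInt α r ≤ Lfun r α := L_ge hα h0.le h1
  have hf0 : 0 ≤ fInt α r := fInt_nonneg h0.le h1
  have hd : fInt α r ≤ Lfun r α / r := by
    rw [le_div_iff₀ h0]; linarith [hL]
  have h2 : (0:ℝ) ≤ 1 - r ^ 2 := by nlinarith
  have : (fInt α r) ^ 2 ≤ (Lfun r α / r) ^ 2 := by
    apply pow_le_pow_left₀ hf0 hd
  nlinarith

lemma prod_Icc_two_cast (k : ℕ) : (∏ j ∈ Finset.Icc 2 k, (j : ℝ)) = (Nat.factorial k : ℝ) := by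
  induction k with
  | zero => simp [Nat.factorial]
  | succ k ih =>
    rcases Nat.lt_or_ge (k + 1) 2 with h | h
    · have hk : k = 0 := by omega
      subst hk
      simp [Nat.factorial]
    · rw [Finset.prod_Icc_succ_top h, ih, Nat.factorial_succ]
      push_cast
      ring

lemma coefA_pos {α : ℝ} (hα : α < 1) (k : ℕ) : 0 < coefA α k := by
  unfold coefA
  apply mul_pos
  · positivity
  · apply Finset.prod_pos
    intro j hj
    simp only [Finset.mem_Icc] at hj
    have : (2:ℝ) ≤ (j:ℝ) := by exact_mod_cast hj.1
    linarith

lemma coefA_le_one {α : ℝ} (hα : 0 ≤ α) (hα1 : α < 1) (k : ℕ) : coefA α k ≤ 1 := by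
  unfold coefA
  have hprod : (∏ j ∈ Finset.Icc 2 k, ((j : ℝ) - 2 * α)) ≤ ∏ j ∈ Finset.Icc 2 k, (j:ℝ) := by
    apply Finset.prod_le_prod
    · intro j hj
      simp only [Finset.mem_Icc] at hj
      have : (2:ℝ) ≤ (j:ℝ) := by exact_mod_cast hj.1
      nlinarith
    · intro j hj
      nlinarith
  rw [prod_Icc_two_cast] at hprod
  have hk : (0:ℝ) < (Nat.factorial k : ℝ) := by positivity
  calc (1 / (Nat.factorial k : ℝ)) * ∏ j ∈ Finset.Icc 2 k, ((j : ℝ) - 2 * α)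
      ≤ (1 / (Nat.factorial k : ℝ)) * (Nat.factorial k : ℝ) := by
        apply mul_le_mul_of_nonneg_left hprod
        positivity
    _ = 1 := by field_simp

noncomputable def term1 (n : ℕ) (α r : ℝ) (k : ℕ) : ℝ :=
  ((n : ℝ) + 1 + k) * coefA α (n + 1 + k) * r ^ (n + k)

noncomputable def term2 (m : ℕ) (α r : ℝ) (k : ℕ) : ℝ :=
  (((m : ℝ) + 1 + k) * (((m : ℝ) + 1 + k) - 1) / (((m : ℝ) + 1 + k) - 2 * α))
    * coefA α (m + 1 + k) * r ^ (m + k)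

lemma psiFun_eq (n m : ℕ) (r α : ℝ) :
  psiFun n m r α = Afun r α - ∑' k : ℕ, term1 n α r k - ∑' k : ℕ, term2 m α r k := rfl

lemma term1_nonneg {n : ℕ} {α r : ℝ} (hα1 : α < 1) (hr : 0 ≤ r) (k : ℕ) :
    0 ≤ term1 n α r k := by
  unfold term1
  have h1 : (0:ℝ) < (n : ℝ) + 1 + k := by positivity
  have := coefA_pos hα1 (n + 1 + k)
  positivity

lemma term2_nonneg {m : ℕ} {α r : ℝ} (hα0 : 0 ≤ α) (hα1 : α < 1) (hm : 2 ≤ m) (hr : 0 ≤ r)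
    (k : ℕ) : 0 ≤ term2 m α r k := by
  unfold term2
  have hm3 : (3:ℝ) ≤ (m : ℝ) + 1 + k := by
    have : (2:ℝ) ≤ (m:ℝ) := by exact_mod_cast hm
    have : (0:ℝ) ≤ (k:ℝ) := by positivity
    linarith
  have h1 : (0:ℝ) < (m : ℝ) + 1 + k := by linarith
  have h2 : (0:ℝ) < ((m : ℝ) + 1 + k) - 1 := by linarith
  have h3 : (0:ℝ) < ((m : ℝ) + 1 + k) - 2 * α := by linarith
  have := coefA_pos hα1 (m + 1 + k)
  positivity

lemma term1_le {n : ℕ} {α r : ℝ} (hα0 : 0 ≤ α) (hα1 : α < 1) (hr : 0 ≤ r) (k : ℕ) :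
    term1 n α r k ≤ ((n : ℝ) + 1 + k) ^ 2 * r ^ (n + k) := by
  unfold term1
  have h1 : (1:ℝ) ≤ (n : ℝ) + 1 + k := by
    have : (0:ℝ) ≤ (n:ℝ) := by positivity
    have : (0:ℝ) ≤ (k:ℝ) := by positivity
    linarith
  have hc1 := coefA_pos hα1 (n + 1 + k)
  have hc2 := coefA_le_one hα0 hα1 (n + 1 + k)
  have hrp : (0:ℝ) ≤ r ^ (n + k) := by positivity
  have : ((n : ℝ) + 1 + k) * coefA α (n + 1 + k) ≤ ((n : ℝ) + 1 + k) ^ 2 := by nlinarith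
  nlinarith

lemma term2_le {m : ℕ} {α r : ℝ} (hα0 : 0 ≤ α) (hα1 : α < 1) (hm : 2 ≤ m) (hr : 0 ≤ r)
    (k : ℕ) : term2 m α r k ≤ ((m : ℝ) + 1 + k) ^ 2 * r ^ (m + k) := by
  unfold term2
  set K : ℝ := (m : ℝ) + 1 + k with hK
  have hm3 : (3:ℝ) ≤ K := by
    have : (2:ℝ) ≤ (m:ℝ) := by exact_mod_cast hm
    have : (0:ℝ) ≤ (k:ℝ) := by positivity
    rw [hK]; linarith
  have hd2 : (0:ℝ) < K - 2 := by linarith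
  have hd : (0:ℝ) < K - 2 * α := by linarith
  have hdiv : K * (K - 1) / (K - 2 * α) ≤ K ^ 2 := by
    rw [div_le_iff₀ hd]
    nlinarith
  have hc1 := coefA_pos hα1 (m + 1 + k)
  have hc2 := coefA_le_one hα0 hα1 (m + 1 + k)
  have hrp : (0:ℝ) ≤ r ^ (m + k) := by positivity
  have hdivpos : (0:ℝ) ≤ K * (K - 1) / (K - 2 * α) := by
    apply div_nonneg _ hd.le
    nlinarith
  have : K * (K - 1) / (K - 2 * α) * coefA α (m + 1 + k) ≤ K ^ 2 := by nlinarith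
  nlinarith

lemma summable_bound (c : ℕ) {r : ℝ} (h0 : 0 ≤ r) (h1 : r < 1) :
    Summable (fun k : ℕ => ((c : ℝ) + 1 + k) ^ 2 * r ^ (c + k)) := by
  have hr : ‖r‖ < 1 := by rw [Real.norm_eq_abs, _root_.abs_of_nonneg h0]; exact h1
  have s2 : Summable (fun k : ℕ => ((k : ℝ) ^ 2) * r ^ k) :=
    summable_pow_mul_geometric_of_norm_lt_one 2 hr
  have s1 : Summable (fun k : ℕ => ((k : ℝ)) * r ^ k) := by
    have := summable_pow_mul_geometric_of_norm_lt_one 1 hr (R := ℝ)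
    simpa using this
  have s0 : Summable (fun k : ℕ => r ^ k) := summable_geometric_of_lt_one h0 h1
  have stot : Summable (fun k : ℕ =>
      r ^ c * ((k : ℝ) ^ 2 * r ^ k) + (2 * ((c:ℝ) + 1) * r ^ c) * ((k : ℝ) * r ^ k)
        + (((c:ℝ) + 1) ^ 2 * r ^ c) * r ^ k) :=
    ((s2.mul_left _).add (s1.mul_left _)).add (s0.mul_left _)
  apply stot.congr
  intro k
  rw [pow_add]
  ring

lemma summable_term1 {n : ℕ} {α r : ℝ} (hα0 : 0 ≤ α) (hα1 : α < 1) (h0 : 0 ≤ r) (h1 : r < 1) :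
    Summable (term1 n α r) :=
  Summable.of_nonneg_of_le (term1_nonneg hα1 h0) (term1_le hα0 hα1 h0) (summable_bound n h0 h1)

lemma summable_term2 {m : ℕ} {α r : ℝ} (hα0 : 0 ≤ α) (hα1 : α < 1) (hm : 2 ≤ m)
    (h0 : 0 ≤ r) (h1 : r < 1) : Summable (term2 m α r) :=
  Summable.of_nonneg_of_le (term2_nonneg hα0 hα1 hm h0) (term2_le hα0 hα1 hm h0)
    (summable_bound m h0 h1)

lemma tsum_term1_mono {n : ℕ} {α r s : ℝ} (hα0 : 0 ≤ α) (hα1 : α < 1)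
    (h0 : 0 ≤ r) (hrs : r ≤ s) (h1 : s < 1) :
    (∑' k, term1 n α r k) ≤ ∑' k, term1 n α s k := by
  apply Summable.tsum_le_tsum _ (summable_term1 hα0 hα1 h0 (lt_of_le_of_lt hrs h1))
    (summable_term1 hα0 hα1 (h0.trans hrs) h1)
  intro k
  unfold term1
  have hc := (coefA_pos hα1 (n + 1 + k)).le
  have h1' : (0:ℝ) ≤ (n : ℝ) + 1 + k := by positivity
  have := pow_le_pow_left₀ h0 hrs (n + k)
  exact mul_le_mul_of_nonneg_left this (mul_nonneg h1' hc)

lemma tsum_term2_mono {m : ℕ} {α r s : ℝ} (hα0 : 0 ≤ α) (hα1 : α < 1) (hm : 2 ≤ m)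
    (h0 : 0 ≤ r) (hrs : r ≤ s) (h1 : s < 1) :
    (∑' k, term2 m α r k) ≤ ∑' k, term2 m α s k := by
  apply Summable.tsum_le_tsum _ (summable_term2 hα0 hα1 hm h0 (lt_of_le_of_lt hrs h1))
    (summable_term2 hα0 hα1 hm (h0.trans hrs) h1)
  intro k
  unfold term2
  have hd : (0:ℝ) ≤ ((m : ℝ) + 1 + k) * (((m : ℝ) + 1 + k) - 1) / (((m : ℝ) + 1 + k) - 2 * α) := by
    have hm3 : (3:ℝ) ≤ (m : ℝ) + 1 + k := by
      have : (2:ℝ) ≤ (m:ℝ) := by exact_mod_cast hm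
      have : (0:ℝ) ≤ (k:ℝ) := by positivity
      linarith
    apply div_nonneg _ (by linarith)
    nlinarith
  have hc := (coefA_pos hα1 (m + 1 + k)).le
  have := pow_le_pow_left₀ h0 hrs (m + k)
  exact mul_le_mul_of_nonneg_left this (mul_nonneg hd hc)

lemma tsum_term1_lb {n : ℕ} {α r : ℝ} (hα0 : 0 ≤ α) (hα1 : α < 1) (h0 : 0 ≤ r) (h1 : r < 1) :
    ((n : ℝ) + 1) * coefA α (n + 1) * r ^ n ≤ ∑' k, term1 n α r k := by
  have h := Summable.le_tsum (summable_term1 (n := n) hα0 hα1 h0 h1) 0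
    (fun j _ => term1_nonneg hα1 h0 j)
  simpa [term1] using h

-- key numeric lemma
lemma nat_key (j : ℕ) : ((j : ℕ) + 3) ^ 2 ≤ 9 * 2 ^ j := by
  induction j with
  | zero => norm_num
  | succ j ih =>
    have h2 : (j + 4) ^ 2 ≤ 2 * (j + 3) ^ 2 := by
      have : (j:ℤ) ≥ 0 := Int.ofNat_nonneg j
      zify
      nlinarith
    calc (j + 1 + 3) ^ 2 = (j + 4) ^ 2 := by ring_nf
      _ ≤ 2 * (j + 3) ^ 2 := h2
      _ ≤ 2 * (9 * 2 ^ j) := by omega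
      _ = 9 * 2 ^ (j + 1) := by ring

lemma real_key (j : ℕ) : ((j : ℝ) + 3) ^ 2 * (1/10 : ℝ) ^ (2 + j) ≤ (9/100) * (1/5) ^ j := by
  have h := nat_key j
  have hcast : ((j : ℝ) + 3) ^ 2 ≤ 9 * 2 ^ j := by exact_mod_cast h
  have hpos : (0:ℝ) < (1/10 : ℝ) ^ (2 + j) := by positivity
  calc ((j : ℝ) + 3) ^ 2 * (1/10 : ℝ) ^ (2 + j)
      ≤ (9 * 2 ^ j) * (1/10 : ℝ) ^ (2 + j) := by
        apply mul_le_mul_of_nonneg_right hcast hpos.le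
    _ = (9/100) * ((2:ℝ) * (1/10)) ^ j := by rw [pow_add, mul_pow]; ring
    _ = (9/100) * (1/5) ^ j := by norm_num

lemma term_bound_tenth {c : ℕ} (hc : 2 ≤ c) (k : ℕ) :
    ((c : ℝ) + 1 + k) ^ 2 * (1/10 : ℝ) ^ (c + k) ≤ (9/100) * (1/5) ^ k := by
  obtain ⟨d, rfl⟩ := Nat.exists_eq_add_of_le hc
  have h1 : ((2 + d : ℕ) : ℝ) + 1 + k = ((d + k : ℕ) : ℝ) + 3 := by push_cast; ring
  have h2 : (2 + d) + k = 2 + (d + k) := by omega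
  rw [h1, h2]
  calc (((d + k : ℕ) : ℝ) + 3) ^ 2 * (1/10 : ℝ) ^ (2 + (d + k))
      ≤ (9/100) * (1/5 : ℝ) ^ (d + k) := real_key (d + k)
    _ ≤ (9/100) * (1/5 : ℝ) ^ k := by
        apply mul_le_mul_of_nonneg_left _ (by norm_num)
        exact pow_le_pow_of_le_one (by norm_num) (by norm_num) (Nat.le_add_left k d)

lemma summable_905 : Summable (fun k : ℕ => (9/100 : ℝ) * (1/5) ^ k) :=
  (summable_geometric_of_lt_one (by norm_num) (by norm_num)).mul_left _

lemma tsum_905 : (∑' k : ℕ, (9/100 : ℝ) * (1/5) ^ k) = 9/80 := by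
  rw [tsum_mul_left, tsum_geometric_of_lt_one (by norm_num) (by norm_num)]
  norm_num

lemma tsum_term1_tenth {n : ℕ} {α : ℝ} (hα0 : 0 ≤ α) (hα1 : α < 1) (hn : 2 ≤ n) :
    (∑' k, term1 n α (1/10) k) ≤ 9/80 := by
  rw [← tsum_905]
  apply Summable.tsum_le_tsum _ (summable_term1 hα0 hα1 (by norm_num) (by norm_num)) summable_905
  intro k
  calc term1 n α (1/10) k ≤ ((n : ℝ) + 1 + k) ^ 2 * (1/10 : ℝ) ^ (n + k) :=
        term1_le hα0 hα1 (by norm_num) k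
    _ ≤ (9/100) * (1/5) ^ k := term_bound_tenth hn k

lemma tsum_term2_tenth {m : ℕ} {α : ℝ} (hα0 : 0 ≤ α) (hα1 : α < 1) (hm : 2 ≤ m) :
    (∑' k, term2 m α (1/10) k) ≤ 9/80 := by
  rw [← tsum_905]
  apply Summable.tsum_le_tsum _ (summable_term2 hα0 hα1 hm (by norm_num) (by norm_num)) summable_905
  intro k
  calc term2 m α (1/10) k ≤ ((m : ℝ) + 1 + k) ^ 2 * (1/10 : ℝ) ^ (m + k) :=
        term2_le hα0 hα1 hm (by norm_num) k
    _ ≤ (9/100) * (1/5) ^ k := term_bound_tenth hm k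

lemma fInt_tenth {α : ℝ} (hα0 : 0 ≤ α) : (90/121 : ℝ) ≤ fInt α (1/10) := by
  unfold fInt
  have hb : (1:ℝ) ≤ 1 + 1/10 := by norm_num
  have h1 : (1 + 1/10 : ℝ) ^ (-2 : ℝ) ≤ (1 + 1/10 : ℝ) ^ (2 * α - 2) :=
    Real.rpow_le_rpow_of_exponent_le hb (by linarith)
  have h2 : (1 + 1/10 : ℝ) ^ (-2 : ℝ) = 100/121 := by
    rw [show (-2 : ℝ) = ((-2 : ℤ) : ℝ) by norm_num, Real.rpow_intCast]
    norm_num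
  rw [h2] at h1
  nlinarith

lemma psi_tenth_pos {n m : ℕ} {α : ℝ} (hα0 : 0 ≤ α) (hα1 : α < 1) (hn : 2 ≤ n) (hm : 2 ≤ m) :
    0 < psiFun n m (1/10) α := by
  rw [psiFun_eq]
  have hA : (1 - (1/10:ℝ) ^ 2) * (fInt α (1/10)) ^ 2 ≤ Afun (1/10) α :=
    Afun_ge hα1.le (by norm_num) (by norm_num)
  have hf := fInt_tenth hα0
  have hf0 : (0:ℝ) ≤ fInt α (1/10) := by linarith
  have hA' : (1 - (1/10:ℝ) ^ 2) * (90/121 : ℝ) ^ 2 ≤ Afun (1/10) α := by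
    nlinarith
  have h1 := tsum_term1_tenth (n := n) hα0 hα1 hn
  have h2 := tsum_term2_tenth (m := m) hα0 hα1 hm
  nlinarith

lemma L_contOn {b : ℝ} (α : ℝ) (h0 : 0 ≤ b) :
    ContinuousOn (fun r => Lfun r α) (Set.Icc 0 b) := by
  have hint : MeasureTheory.IntegrableOn (fInt α) (Set.uIcc 0 b) MeasureTheory.volume := by
    rw [Set.uIcc_of_le h0]
    apply ContinuousOn.integrableOn_Icc
    exact (fInt_contOn α).mono (fun x hx => hx.1)
  have := intervalIntegral.continuousOn_primitive_interval hint
  rw [Set.uIcc_of_le h0] at this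
  exact this

lemma psi_contOn {n m : ℕ} {α b : ℝ} (hα0 : 0 ≤ α) (hα1 : α < 1) (hn : 2 ≤ n) (hm : 2 ≤ m)
    (hb0 : 0 < b) (hb1 : b < 1) :
    ContinuousOn (fun r => psiFun n m r α) (Set.Icc (1/10) b) := by
  simp only [psiFun_eq]
  have hsub : Set.Icc (1/10 : ℝ) b ⊆ Set.Icc 0 b := by
    intro x hx; exact ⟨by linarith [hx.1], hx.2⟩
  have hA : ContinuousOn (fun r => Afun r α) (Set.Icc (1/10 : ℝ) b) := by
    unfold Afun
    apply ContinuousOn.mul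
    · apply ContinuousOn.div
      · exact (continuous_const.sub (continuous_pow 2)).continuousOn
      · exact (continuous_pow 2).continuousOn
      · intro x hx
        have : (0:ℝ) < x := by linarith [hx.1]
        positivity
    · exact (((L_contOn α hb0.le).mono hsub).pow 2)
  have hS1 : ContinuousOn (fun r => ∑' k, term1 n α r k) (Set.Icc (0:ℝ) b) := by
    apply continuousOn_tsum (u := fun k => ((n : ℝ) + 1 + k) ^ 2 * b ^ (n + k))
    · intro k
      unfold term1
      exact (continuous_const.mul (continuous_pow _)).continuousOn
    · exact summable_bound n hb0.le hb1
    · intro k x hx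
      rw [Real.norm_eq_abs, _root_.abs_of_nonneg (term1_nonneg hα1 hx.1 k)]
      calc term1 n α x k ≤ ((n : ℝ) + 1 + k) ^ 2 * x ^ (n + k) := term1_le hα0 hα1 hx.1 k
        _ ≤ ((n : ℝ) + 1 + k) ^ 2 * b ^ (n + k) := by
            apply mul_le_mul_of_nonneg_left (pow_le_pow_left₀ hx.1 hx.2 _) (by positivity)
  have hS2 : ContinuousOn (fun r => ∑' k, term2 m α r k) (Set.Icc (0:ℝ) b) := by
    apply continuousOn_tsum (u := fun k => ((m : ℝ) + 1 + k) ^ 2 * b ^ (m + k))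
    · intro k
      unfold term2
      exact (continuous_const.mul (continuous_pow _)).continuousOn
    · exact summable_bound m hb0.le hb1
    · intro k x hx
      rw [Real.norm_eq_abs, _root_.abs_of_nonneg (term2_nonneg hα0 hα1 hm hx.1 k)]
      calc term2 m α x k ≤ ((m : ℝ) + 1 + k) ^ 2 * x ^ (m + k) :=
            term2_le hα0 hα1 hm hx.1 k
        _ ≤ ((m : ℝ) + 1 + k) ^ 2 * b ^ (m + k) := by
            apply mul_le_mul_of_nonneg_left (pow_le_pow_left₀ hx.1 hx.2 _) (by positivity)
  exact (hA.sub (hS1.mono hsub)).sub (hS2.mono hsub)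


theorem psi_unique_zero (α : ℝ) (hα0 : 0 ≤ α) (hα1 : α < 1)
    (n m : ℕ) (hn : 2 ≤ n) (hm : 2 ≤ m) :
    ∃ rnm : ℝ, rnm ∈ Set.Ioo (0 : ℝ) 1 ∧ psiFun n m rnm α = 0 ∧
      (∀ r ∈ Set.Ioo (0 : ℝ) 1, psiFun n m r α = 0 → r = rnm) ∧
      (∀ r : ℝ, 0 < r → r < rnm → 0 < psiFun n m r α) := by
  have hψanti : ∀ r s : ℝ, 0 < r → r < s → s < 1 → psiFun n m s α < psiFun n m r α := by
    intro r s h0 hrs h1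
    rw [psiFun_eq, psiFun_eq]
    have hA := Afun_strictAnti (α := α) hα1.le h0 hrs h1
    have h1' := tsum_term1_mono (n := n) hα0 hα1 h0.le hrs.le h1
    have h2' := tsum_term2_mono (m := m) hα0 hα1 hm h0.le hrs.le h1
    linarith
  set ε := ((n : ℝ) + 1) * coefA α (n + 1) * (1/2 : ℝ) ^ n with hεdef
  have hε : 0 < ε := by
    have h := coefA_pos hα1 (n + 1)
    have : (0:ℝ) < (n : ℝ) + 1 := by positivity
    positivity
  set δ := min (ε/4) (1/4 : ℝ) with hδdef
  have hδ0 : 0 < δ := lt_min (by linarith) (by norm_num)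
  have hδ1 : δ ≤ 1/4 := min_le_right _ _
  have hδε : δ ≤ ε/4 := min_le_left _ _
  set b := 1 - δ with hbdef
  have hb34 : 3/4 ≤ b := by rw [hbdef]; linarith
  have hb1 : b < 1 := by rw [hbdef]; linarith
  have hb0 : 0 < b := by linarith
  have hψb : psiFun n m b α < 0 := by
    rw [psiFun_eq]
    have hA := Afun_le (α := α) hα1.le hb0 hb1.le
    have hS2 : 0 ≤ ∑' k, term2 m α b k :=
      tsum_nonneg (fun k => term2_nonneg hα0 hα1 hm hb0.le k)
    have hS1 : ((n : ℝ) + 1) * coefA α (n + 1) * b ^ n ≤ ∑' k, term1 n α b k :=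
      tsum_term1_lb hα0 hα1 hb0.le hb1
    have hbn : (1/2 : ℝ) ^ n ≤ b ^ n := pow_le_pow_left₀ (by norm_num) (by linarith) n
    have hcn : 0 ≤ ((n : ℝ) + 1) * coefA α (n + 1) := by
      have := coefA_pos hα1 (n + 1)
      positivity
    have hεb : ε ≤ ((n : ℝ) + 1) * coefA α (n + 1) * b ^ n := by
      rw [hεdef]
      nlinarith
    have hb2 : 1 - b ^ 2 ≤ 2 * δ := by rw [hbdef]; nlinarith
    linarith
  have hψa : 0 < psiFun n m (1/10) α := psi_tenth_pos hα0 hα1 hn hm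
  have hab : (1/10 : ℝ) ≤ b := by linarith
  have hcont := psi_contOn (n := n) (m := m) hα0 hα1 hn hm hb0 hb1
  have h0mem : (0:ℝ) ∈ Set.Icc (psiFun n m b α) (psiFun n m (1/10) α) := ⟨hψb.le, hψa.le⟩
  obtain ⟨rnm, hrmem, hrval⟩ := intermediate_value_Icc' hab hcont h0mem
  replace hrval : psiFun n m rnm α = 0 := hrval
  have hrnm0 : 0 < rnm := by linarith [hrmem.1]
  have hrnm1 : rnm < 1 := lt_of_le_of_lt hrmem.2 hb1
  refine ⟨rnm, ⟨hrnm0, hrnm1⟩, hrval, ?_, ?_⟩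
  · intro r hr hrz
    rcases lt_trichotomy r rnm with h | h | h
    · exfalso
      have := hψanti r rnm hr.1 h hrnm1
      rw [hrz, hrval] at this
      exact lt_irrefl 0 this
    · exact h
    · exfalso
      have := hψanti rnm r hrnm0 h hr.2
      rw [hrz, hrval] at this
      exact lt_irrefl 0 this
  · intro r h0 h1
    have := hψanti r rnm h0 h1 hrnm1
    rw [hrval] at this
    exact this
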